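/- arXiv:math/0507483 — 2 statements merged into one kernel-verified Lean document; each statement's English description precedes it below -/
import Mathlib

section
/- Let m ≥ 1 and d = 2m. Let 𝓗 : ℝ^d → ℝ be three times continuously differentiable and define ψ(z) = ⟨J∇𝓗(z), (Hess 𝓗(z))(J∇𝓗(z))⟩. Let A be a symmetric d × d real matrix, b ∈ ℝ^d, c ∈ ℝ, and L(z) = ½⟨z, Az⟩ + ⟨b, z⟩ + c a quadratic function such that ⟨∇L(z), J∇𝓗(z)⟩ = 0 for all z ∈ ℝ^d. Suppose z₀, z₁ ∈ ℝ^d and λ, μ ∈ ℝ satisfy z₁ − z₀ = λ J∇𝓗(z̄) + μ J∇ψ(z̄), where z̄ = (z₀ + z₁)/2. Then L(z₁) = L(z₀). -/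
noncomputable section

open scoped RealInnerProductSpace

/-- `ℝ^m` with the Euclidean inner product. -/
abbrev V (m : ℕ) : Type := EuclideanSpace ℝ (Fin m)

/-- Phase space `ℝ^m × ℝ^m ≅ ℝ^(2m)`, with the Euclidean (`L²`) inner product. -/
abbrev Phase (m : ℕ) : Type := WithLp 2 (V m × V m)

/-- The identification `Phase m ≃ ℝ^m × ℝ^m`. -/
def e (m : ℕ) : Phase m ≃L[ℝ] V m × V m := WithLp.prodContinuousLinearEquiv 2 ℝ (V m) (V m)

/-- The point `z = (q, p)` of phase space. -/
def pt {m : ℕ} (q p : V m) : Phase m := (e m).symm (q, p)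

/-- The position (`q`) part of a phase-space point. -/
def qpart {m : ℕ} (z : Phase m) : V m := ((e m) z).1

/-- The momentum (`p`) part of a phase-space point. -/
def ppart {m : ℕ} (z : Phase m) : V m := ((e m) z).2

/-- The standard symplectic matrix `J`, acting by `J (q, p) = (p, -q)`. -/
def Jmap {m : ℕ} : Phase m →L[ℝ] Phase m :=
  ((e m).symm : V m × V m →L[ℝ] Phase m).comp
    (((ContinuousLinearMap.snd ℝ (V m) (V m)).prod
      (-(ContinuousLinearMap.fst ℝ (V m) (V m)))).comp ((e m) : Phase m →L[ℝ] V m × V m))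

/-- The Hessian of `H` at `z`, viewed as a linear map: the derivative of the gradient. -/
def hess {m : ℕ} (H : Phase m → ℝ) (z : Phase m) : Phase m →L[ℝ] Phase m :=
  fderiv ℝ (gradient H) z

/-- `ψ_H(z) = ⟨J ∇H(z), (Hess H(z)) (J ∇H(z))⟩`. -/
def psi {m : ℕ} (H : Phase m → ℝ) (z : Phase m) : ℝ :=
  ⟪Jmap (gradient H z), hess H z (Jmap (gradient H z))⟫

section Aux

variable {m : ℕ}

/-- The defining property of the gradient, in terms of the Fréchet derivative. -/
lemma inner_gradient (f : Phase m → ℝ) (z v : Phase m) :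
    ⟪gradient f z, v⟫ = fderiv ℝ f z v := by
  rw [gradient]; exact InnerProductSpace.toDual_symm_apply

/-- `J` is skew-adjoint. -/
lemma Jmap_skew (x y : Phase m) : ⟪Jmap x, y⟫ = -⟪x, Jmap y⟫ := by
  simp [Jmap, e, WithLp.prod_inner_apply]

lemma Jmap_skew' (x y : Phase m) : ⟪x, Jmap y⟫ = -⟪Jmap x, y⟫ := by
  have := Jmap_skew x y; linarith

/-- The gradient of a `C^{k+1}` function is `C^k`. -/
lemma contDiff_gradient (f : Phase m → ℝ) {n k : WithTop ℕ∞} (hf : ContDiff ℝ n f)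
    (hk : k + 1 ≤ n) : ContDiff ℝ k (gradient f) := by
  have : gradient f = fun z => (InnerProductSpace.toDual ℝ (Phase m)).symm (fderiv ℝ f z) := rfl
  rw [this]
  exact ((InnerProductSpace.toDual ℝ (Phase m)).symm.contDiff).comp (hf.fderiv_right hk)

/-- The derivative of the gradient, paired against a vector, is the second derivative. -/
lemma hess_inner (f : Phase m → ℝ) (hf : ContDiff ℝ 2 f) (z a w : Phase m) :
    ⟪fderiv ℝ (gradient f) z a, w⟫ = fderiv ℝ (fderiv ℝ f) z a w := by
  have hgd : ContDiff ℝ 1 (gradient f) := contDiff_gradient f hf (by norm_num)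
  have hfd : ContDiff ℝ 1 (fderiv ℝ f) := hf.fderiv_right (by norm_num)
  have h1 : fderiv ℝ (fun t => ⟪gradient f t, w⟫) z a
      = ⟪fderiv ℝ (gradient f) z a, w⟫ := by
    rw [fderiv_inner_apply (𝕜 := ℝ) (hgd.differentiable (by norm_num) z)
      (differentiableAt_const w) a]
    simp
  have h2 : (fun t : Phase m => ⟪gradient f t, w⟫) = fun t => fderiv ℝ f t w :=
    funext fun t => inner_gradient f t w
  have h3 : fderiv ℝ (fun t => fderiv ℝ f t w) z a = fderiv ℝ (fderiv ℝ f) z a w := by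
    rw [fderiv_clm_apply (hfd.differentiable (by norm_num) z) (differentiableAt_const w)]
    simp
  rw [← h1, h2, h3]

/-- The Hessian of a `C²` function is symmetric. -/
lemma hess_symm (f : Phase m → ℝ) (hf : ContDiff ℝ 2 f) (z a w : Phase m) :
    ⟪fderiv ℝ (gradient f) z a, w⟫ = ⟪a, fderiv ℝ (gradient f) z w⟫ := by
  rw [hess_inner f hf z a w, real_inner_comm, hess_inner f hf z w a]
  exact (hf.contDiffAt.isSymmSndFDerivAt (by simp)).eq a w

/-- The gradient of the quadratic function `L(z) = ½⟨z, Az⟩ + ⟨b, z⟩ + c` is `Az + b`. -/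
lemma gradL (A : Phase m →L[ℝ] Phase m) (hA : ∀ v w : Phase m, ⟪A v, w⟫ = ⟪v, A w⟫)
    (b : Phase m) (c : ℝ) (L : Phase m → ℝ)
    (hL : ∀ z : Phase m, L z = (1 / 2 : ℝ) * ⟪z, A z⟫ + ⟪b, z⟫ + c) (z : Phase m) :
    gradient L z = A z + b := by
  have h1 : HasFDerivAt (fun w : Phase m => (1 / 2 : ℝ) * ⟪w, A w⟫ + ⟪b, w⟫ + c)
      (InnerProductSpace.toDual ℝ (Phase m) (A z + b)) z := by
    have hq : HasFDerivAt (fun w : Phase m => ⟪w, A w⟫)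
        ((fderivInnerCLM ℝ (z, A z)).comp ((ContinuousLinearMap.id ℝ (Phase m)).prod A)) z :=
      (hasFDerivAt_id z).inner ℝ (A.hasFDerivAt)
    have hb : HasFDerivAt (fun w : Phase m => ⟪b, w⟫)
        ((fderivInnerCLM ℝ (b, z)).comp ((0 : Phase m →L[ℝ] Phase m).prod
          (ContinuousLinearMap.id ℝ (Phase m)))) z :=
      (hasFDerivAt_const b z).inner ℝ (hasFDerivAt_id z)
    have h := ((hq.const_mul ((1:ℝ)/2)).add hb).add_const c
    have heq : ((1:ℝ)/2) • ((fderivInnerCLM ℝ (z, A z)).comp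
          ((ContinuousLinearMap.id ℝ (Phase m)).prod A))
        + ((fderivInnerCLM ℝ (b, z)).comp ((0 : Phase m →L[ℝ] Phase m).prod
          (ContinuousLinearMap.id ℝ (Phase m))))
        = InnerProductSpace.toDual ℝ (Phase m) (A z + b) := by
      ext v
      simp only [ContinuousLinearMap.add_apply, ContinuousLinearMap.coe_smul',
        Pi.smul_apply, ContinuousLinearMap.comp_apply, ContinuousLinearMap.prod_apply,
        ContinuousLinearMap.coe_id', id_eq, ContinuousLinearMap.zero_apply,
        fderivInnerCLM_apply, InnerProductSpace.toDual_apply_apply, inner_add_left,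
        inner_zero_left, smul_eq_mul, inner_zero_right, add_zero, zero_add]
      rw [real_inner_comm (A v) z, hA v z, real_inner_comm (A z) v]
      ring
    rwa [heq] at h
  have h2 : HasFDerivAt L (InnerProductSpace.toDual ℝ (Phase m) (A z + b)) z :=
    h1.congr_of_eventuallyEq (Filter.Eventually.of_forall hL)
  have h3 := (hasFDerivAt_iff_hasGradientAt.mp h2)
  rw [LinearIsometryEquiv.symm_apply_apply] at h3
  exact h3.gradient

/-- The key lemma: if the quadratic form with gradient `Az + b` is a first integral of `𝓗`,
then it also Poisson-commutes with `ψ_𝓗`. -/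
lemma psi_bracket (𝓗 : Phase m → ℝ) (h𝓗 : ContDiff ℝ 3 𝓗)
    (A : Phase m →L[ℝ] Phase m) (hA : ∀ v w : Phase m, ⟪A v, w⟫ = ⟪v, A w⟫)
    (b : Phase m)
    (hbr : ∀ z : Phase m, ⟪A z + b, Jmap (gradient 𝓗 z)⟫ = 0) (z : Phase m) :
    ⟪A z + b, Jmap (gradient (psi 𝓗) z)⟫ = 0 := by
  classical
  have : ContinuousSMul ℝ (Phase m) := inferInstance
  have : ContinuousAdd (Phase m) := inferInstance
  have h2 : ContDiff ℝ 2 𝓗 := h𝓗.of_le (by norm_num)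
  have hG : ContDiff ℝ 2 (gradient 𝓗) := contDiff_gradient 𝓗 h𝓗 (by norm_num)
  set G : Phase m → Phase m := gradient 𝓗 with hGdef
  set Hs : Phase m → Phase m →L[ℝ] Phase m := fun z => fderiv ℝ G z with hHsdef
  have hHs : ContDiff ℝ 1 Hs := hG.fderiv_right (by norm_num)
  have hGd : Differentiable ℝ G := hG.differentiable (by norm_num)
  have hHsd : Differentiable ℝ Hs := hHs.differentiable (by norm_num)
  set u : Phase m → Phase m := fun z => Jmap (G z) with hudef
  set w : Phase m → Phase m := fun z => Jmap (A z + b) with hwdef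
  have hud : Differentiable ℝ u := Jmap.differentiable.comp hGd
  have hwd : Differentiable ℝ w :=
    Jmap.differentiable.comp ((A.differentiable).add_const b)
  have hfu : ∀ x : Phase m, fderiv ℝ u x = Jmap.comp (Hs x) := fun x =>
    (Jmap.hasFDerivAt.comp x (hGd x).hasFDerivAt).fderiv
  -- Step A: differentiate the first-integral identity `⟪Az + b, J∇𝓗(z)⟫ = 0`.
  have keyA : ∀ x v : Phase m, ⟪A v, u x⟫ + ⟪A x + b, Jmap (Hs x v)⟫ = 0 := by
    intro x v
    have hz : (fun x : Phase m => ⟪A x + b, u x⟫) = fun _ => (0 : ℝ) :=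
      funext fun x => hbr x
    have hder : fderiv ℝ (fun x : Phase m => ⟪A x + b, u x⟫) x v = 0 := by
      rw [hz, fderiv_fun_const]
      simp
    have hAd : DifferentiableAt ℝ (fun z : Phase m => A z + b) x :=
      (A.differentiable x).add_const b
    rw [fderiv_inner_apply (𝕜 := ℝ) hAd (hud x) v] at hder
    have hfA : fderiv ℝ (fun z : Phase m => A z + b) x = A :=
      ((A.hasFDerivAt).add_const b).fderiv
    rw [hfA, hfu x] at hder
    simp only [ContinuousLinearMap.comp_apply] at hder
    linarith
  -- Step B: `Hess𝓗(x) J(Ax + b) = A J∇𝓗(x)`.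
  have keyB : ∀ x : Phase m, Hs x (w x) = A (u x) := by
    intro x
    apply ext_inner_right ℝ
    intro v
    have h1 := keyA x v
    rw [Jmap_skew' (A x + b) (Hs x v)] at h1
    have hsym : ⟪Jmap (A x + b), Hs x v⟫ = ⟪Hs x (w x), v⟫ :=
      (hess_symm 𝓗 h2 x (Jmap (A x + b)) v).symm
    have hAv : ⟪A v, u x⟫ = ⟪A (u x), v⟫ := by
      rw [hA v (u x), real_inner_comm]
    rw [hsym, hAv] at h1
    linarith
  -- Step C: differentiate the identity of Step B.
  have keyC : ∀ x v : Phase m,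
      (fderiv ℝ Hs x v) (w x) + Hs x (Jmap (A v)) = A (Jmap (Hs x v)) := by
    intro x v
    have hz : (fun x : Phase m => Hs x (w x)) = fun x => A (u x) :=
      funext fun x => keyB x
    have hfw : fderiv ℝ w x = Jmap.comp A := by
      have h : HasFDerivAt (fun z : Phase m => A z + b) A x := (A.hasFDerivAt).add_const b
      exact (Jmap.hasFDerivAt.comp x h).fderiv
    have hlhs : fderiv ℝ (fun x : Phase m => Hs x (w x)) x v
        = Hs x (Jmap (A v)) + (fderiv ℝ Hs x v) (w x) := by
      rw [fderiv_clm_apply (hHsd x) (hwd x)]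
      simp only [ContinuousLinearMap.add_apply, ContinuousLinearMap.comp_apply,
        ContinuousLinearMap.flip_apply, hfw]
    have hrhs : fderiv ℝ (fun x : Phase m => A (u x)) x v = A (Jmap (Hs x v)) := by
      have h := (A.hasFDerivAt.comp x (hud x).hasFDerivAt).fderiv
      rw [show (fun x : Phase m => A (u x)) = A ∘ u from rfl, h, hfu x]
      simp only [ContinuousLinearMap.comp_apply]
    rw [← hrhs, ← hz, hlhs, add_comm]
  -- Step D: symmetry of the third derivative of `𝓗` (Schwarz for `∇𝓗`).
  have keyD : ∀ x v v' : Phase m, (fderiv ℝ Hs x v) v' = (fderiv ℝ Hs x v') v := by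
    intro x v v'
    exact (hG.contDiffAt.isSymmSndFDerivAt (by simp)).eq v v'
  -- Step E: the derivative of `ψ` in the direction `J(Az + b)` vanishes.
  have hpsi_eq : psi 𝓗 = fun x => ⟪u x, Hs x (u x)⟫ := rfl
  have hHud : Differentiable ℝ (fun x : Phase m => Hs x (u x)) := fun x =>
    (hHsd x).clm_apply (hud x)
  have keyE : fderiv ℝ (psi 𝓗) z (w z) = 0 := by
    rw [hpsi_eq, fderiv_inner_apply (𝕜 := ℝ) (hud z) (hHud z) (w z)]
    have hfHu : fderiv ℝ (fun x : Phase m => Hs x (u x)) z (w z)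
        = Hs z (Jmap (Hs z (w z))) + (fderiv ℝ Hs z (w z)) (u z) := by
      rw [fderiv_clm_apply (hHsd z) (hud z)]
      simp only [ContinuousLinearMap.add_apply, ContinuousLinearMap.comp_apply,
        ContinuousLinearMap.flip_apply, hfu z]
    rw [hfHu, hfu z]
    simp only [ContinuousLinearMap.comp_apply]
    rw [keyB z, keyD z (w z) (u z)]
    have hsw2 : (fderiv ℝ Hs z (u z)) (w z)
        = A (Jmap (Hs z (u z))) - Hs z (Jmap (A (u z))) := by
      rw [eq_sub_iff_add_eq]; exact keyC z (u z)
    rw [hsw2, inner_add_right, inner_sub_right]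
    have e1 : ⟪u z, A (Jmap (Hs z (u z)))⟫ = -⟪Jmap (A (u z)), Hs z (u z)⟫ := by
      rw [← hA (u z) (Jmap (Hs z (u z))), Jmap_skew' (A (u z)) (Hs z (u z))]
    rw [e1]
    ring
  -- Step F: conclude.
  have hgradpsi : ⟪gradient (psi 𝓗) z, w z⟫ = 0 := by
    rw [inner_gradient]; exact keyE
  rw [Jmap_skew' (A z + b) (gradient (psi 𝓗) z)]
  have : ⟪Jmap (A z + b), gradient (psi 𝓗) z⟫ = 0 := by
    rw [real_inner_comm]; exact hgradpsi
  rw [this, neg_zero]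

/-- Exactness of quadratic functions at the midpoint:
`L z₁ - L z₀ = ⟪∇L(z̄), z₁ - z₀⟫`. -/
lemma quad_diff (A : Phase m →L[ℝ] Phase m) (hA : ∀ v w : Phase m, ⟪A v, w⟫ = ⟪v, A w⟫)
    (b : Phase m) (c : ℝ) (L : Phase m → ℝ)
    (hL : ∀ z : Phase m, L z = (1 / 2 : ℝ) * ⟪z, A z⟫ + ⟪b, z⟫ + c)
    (z₀ z₁ zbar : Phase m) (hzbar : zbar = (2:ℝ)⁻¹ • (z₀ + z₁)) :
    L z₁ - L z₀ = ⟪A zbar + b, z₁ - z₀⟫ := by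
  rw [hL z₁, hL z₀, hzbar]
  have h01 : ⟪z₀, A z₁⟫ = ⟪z₁, A z₀⟫ := by
    rw [← hA z₀ z₁, real_inner_comm]
  simp only [map_smul, map_add, inner_add_left, inner_sub_right, inner_add_right,
    inner_sub_left, real_inner_smul_left, real_inner_smul_right]
  rw [hA z₀ z₁, hA z₁ z₁, hA z₀ z₀, hA z₁ z₀, h01]
  ring

end Aux

/-- quadratic conservation laws for the regularized DTH step.
If `L(z) = ½⟨z, Az⟩ + ⟨b, z⟩ + c` is a quadratic first integral of `𝓗`
(`[L, 𝓗] ≡ 0`), and `z₁ - z₀ = λ J∇𝓗(z̄) + μ J∇ψ(z̄)` with `z̄ = (z₀ + z₁)/2`,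
then `L(z₁) = L(z₀)`. -/
theorem dth_quadratic_conservation (m : ℕ) (hm : 1 ≤ m)
    (𝓗 : Phase m → ℝ) (h𝓗 : ContDiff ℝ 3 𝓗)
    (A : Phase m →L[ℝ] Phase m) (hA : ∀ v w : Phase m, ⟪A v, w⟫ = ⟪v, A w⟫)
    (b : Phase m) (c : ℝ) (L : Phase m → ℝ)
    (hL : ∀ z : Phase m, L z = (1 / 2 : ℝ) * ⟪z, A z⟫ + ⟪b, z⟫ + c)
    (hbracket : ∀ z : Phase m, ⟪gradient L z, Jmap (gradient 𝓗 z)⟫ = 0)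
    (z₀ z₁ : Phase m) (lam mu : ℝ)
    (zbar : Phase m) (hzbar : zbar = (2:ℝ)⁻¹ • (z₀ + z₁))
    (hstep : z₁ - z₀
      = lam • Jmap (gradient 𝓗 zbar) + mu • Jmap (gradient (psi 𝓗) zbar)) :
    L z₁ = L z₀ := by
  have hgL : ∀ z : Phase m, gradient L z = A z + b := gradL A hA b c L hL
  have hbr : ∀ z : Phase m, ⟪A z + b, Jmap (gradient 𝓗 z)⟫ = 0 := by
    intro z; rw [← hgL z]; exact hbracket z
  have hpsi : ⟪A zbar + b, Jmap (gradient (psi 𝓗) zbar)⟫ = 0 :=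
    psi_bracket 𝓗 h𝓗 A hA b hbr zbar
  have hdiff : L z₁ - L z₀ = ⟪A zbar + b, z₁ - z₀⟫ :=
    quad_diff A hA b c L hL z₀ z₁ zbar hzbar
  have hzero : ⟪A zbar + b, z₁ - z₀⟫ = 0 := by
    rw [hstep, inner_add_right, real_inner_smul_right, real_inner_smul_right,
      hbr zbar, hpsi]
    ring
  have : L z₁ - L z₀ = 0 := by rw [hdiff, hzero]
  linarith
end
end

section
/- Let m ≥ 1 and d = 2m, let T be a d × d real symplectic matrix (Tᵀ J T = J), let 𝓗 : ℝ^d → ℝ be three times continuously differentiable, and let c ∈ ℝ. Define 𝓚(Z) = 𝓗(TZ), ψ_𝓗(z) = ⟨J∇𝓗(z), (Hess 𝓗(z))(J∇𝓗(z))⟩, and ψ_𝓚(Z) = ⟨J∇𝓚(Z), (Hess 𝓚(Z))(J∇𝓚(Z))⟩. Let Z₀, Z₁ ∈ ℝ^d, λ, μ ∈ ℝ, and set z₀ = TZ₀, z₁ = TZ₁, Z̄ = (Z₀ + Z₁)/2, z̄ = (z₀ + z₁)/2. Then (Z₀, Z₁, λ, μ) satisfies the regularized DTH equations for 𝓚 —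 namely Z₁ − Z₀ = λJ∇𝓚(Z̄) + μJ∇ψ_𝓚(Z̄), 𝓚(Z̄) = 0, ψ_𝓚(Z̄) ≥ c, μ(ψ_𝓚(Z̄) − c) = 0, μ ≤ 0 — if and only if (z₀, z₁, λ, μ) satisfies the regularized DTH equations for 𝓗: z₁ − z₀ = λJ∇𝓗(z̄) + μJ∇ψ_𝓗(z̄), 𝓗(z̄) = 0, ψ_𝓗(z̄) ≥ c, μ(ψ_𝓗(z̄) − c) = 0, μ ≤ 0. -/
set_option maxHeartbeats 1000000

noncomputable section

open scoped RealInnerProductSpace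

section AuxLemmas

variable {m : ℕ}

lemma Jmap_Jmap (v : Phase m) : Jmap (Jmap v) = -v := by
  simp [Jmap, e]; rfl

lemma inner_Jmap_left (v w : Phase m) : ⟪Jmap v, w⟫ = -⟪v, Jmap w⟫ := by
  simp [Jmap, e, WithLp.prod_inner_apply, real_inner_comm]

lemma adjoint_Jmap_T (T : Phase m →L[ℝ] Phase m)
    (hT : ∀ v w : Phase m, ⟪T v, Jmap (T w)⟫ = ⟪v, Jmap w⟫) (w : Phase m) :
    ContinuousLinearMap.adjoint T (Jmap (T w)) = Jmap w := by
  apply ext_inner_left ℝ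
  intro v
  rw [ContinuousLinearMap.adjoint_inner_right]
  exact hT v w

lemma adjoint_T_surj (T : Phase m →L[ℝ] Phase m)
    (hT : ∀ v w : Phase m, ⟪T v, Jmap (T w)⟫ = ⟪v, Jmap w⟫) :
    Function.Surjective (ContinuousLinearMap.adjoint T) := by
  intro y
  refine ⟨Jmap (T (-(Jmap y))), ?_⟩
  rw [adjoint_Jmap_T T hT, map_neg, Jmap_Jmap, neg_neg]

lemma adjoint_T_inj (T : Phase m →L[ℝ] Phase m)
    (hT : ∀ v w : Phase m, ⟪T v, Jmap (T w)⟫ = ⟪v, Jmap w⟫) :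
    Function.Injective (ContinuousLinearMap.adjoint T) := by
  exact (LinearMap.injective_iff_surjective
    (f := ((ContinuousLinearMap.adjoint T : Phase m →L[ℝ] Phase m) : Phase m →ₗ[ℝ] Phase m))).mpr
    (adjoint_T_surj T hT)

lemma T_Jmap_adjoint (T : Phase m →L[ℝ] Phase m)
    (hT : ∀ v w : Phase m, ⟪T v, Jmap (T w)⟫ = ⟪v, Jmap w⟫) (w : Phase m) :
    T (Jmap (ContinuousLinearMap.adjoint T w)) = Jmap w := by
  have h1 : ContinuousLinearMap.adjoint T
      (Jmap (T (Jmap (ContinuousLinearMap.adjoint T w))))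
      = ContinuousLinearMap.adjoint T (-w) := by
    rw [adjoint_Jmap_T T hT, Jmap_Jmap, map_neg]
  have h2 := adjoint_T_inj T hT h1
  have h3 := congrArg (Jmap (m := m)) h2
  rw [Jmap_Jmap, map_neg] at h3
  exact neg_injective h3

lemma T_inj (T : Phase m →L[ℝ] Phase m)
    (hT : ∀ v w : Phase m, ⟪T v, Jmap (T w)⟫ = ⟪v, Jmap w⟫) :
    Function.Injective T := by
  intro a b h
  have h0 : T (a - b) = 0 := by rw [map_sub, h, sub_self]
  have key : ∀ u : Phase m, ⟪a - b, u⟫ = (0 : ℝ) := by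
    intro u
    obtain ⟨y, hy⟩ := adjoint_T_surj T hT u
    rw [← hy, ContinuousLinearMap.adjoint_inner_right, h0, inner_zero_left]
  have h4 := key (a - b)
  rw [inner_self_eq_zero] at h4
  exact sub_eq_zero.mp h4

lemma gradient_comp (T : Phase m →L[ℝ] Phase m) (f : Phase m → ℝ) (Z : Phase m)
    (hf : DifferentiableAt ℝ f (T Z)) :
    gradient (fun Z => f (T Z)) Z = ContinuousLinearMap.adjoint T (gradient f (T Z)) := by
  have h1 : HasGradientAt f (gradient f (T Z)) (T Z) := hf.hasGradientAt
  have h2 : HasFDerivAt (fun Z => f (T Z))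
      ((InnerProductSpace.toDual ℝ (Phase m) (gradient f (T Z))).comp T) Z :=
    (h1.hasFDerivAt).comp Z T.hasFDerivAt
  have h3 : (InnerProductSpace.toDual ℝ (Phase m) (gradient f (T Z))).comp T
      = InnerProductSpace.toDual ℝ (Phase m)
          (ContinuousLinearMap.adjoint T (gradient f (T Z))) := by
    ext v
    simp [InnerProductSpace.toDual_apply_apply, ContinuousLinearMap.adjoint_inner_left]
  rw [h3] at h2
  rw [h2.hasGradientAt.gradient]
  exact LinearIsometryEquiv.symm_apply_apply _ _

lemma gradient_contDiff_two (f : Phase m → ℝ) (hf : ContDiff ℝ 3 f) :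
    ContDiff ℝ 2 (gradient f) := by
  have h2 : ContDiff ℝ 2 (fderiv ℝ f) := hf.fderiv_right (m := 2) (by norm_num)
  have h3 : ContDiff ℝ 2 (fun x => (InnerProductSpace.toDual ℝ (Phase m)).symm (fderiv ℝ f x)) :=
    ((InnerProductSpace.toDual ℝ (Phase m)).symm.contDiff).comp h2
  exact h3

set_option synthInstance.maxHeartbeats 400000 in
lemma hess_comp (T : Phase m →L[ℝ] Phase m) (f : Phase m → ℝ) (hf : ContDiff ℝ 3 f)
    (Z : Phase m) :
    hess (fun Z => f (T Z)) Z
      = ((ContinuousLinearMap.adjoint T).comp (hess f (T Z))).comp T := by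
  have hgc : ContDiff ℝ 2 (gradient f) := gradient_contDiff_two f hf
  have hgd : Differentiable ℝ (gradient f) := hgc.differentiable two_ne_zero
  have hge : gradient (fun Z => f (T Z))
      = fun Z => ContinuousLinearMap.adjoint T (gradient f (T Z)) :=
    funext fun Z => gradient_comp T f Z ((hf.differentiable (by norm_num)).differentiableAt)
  have h0 : HasFDerivAt (fun Z => gradient f (T Z))
      ((fderiv ℝ (gradient f) (T Z)).comp T) Z :=
    ((hgd (T Z)).hasFDerivAt).comp Z T.hasFDerivAt
  have h1 := (ContinuousLinearMap.adjoint T).hasFDerivAt.comp Z h0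
  unfold hess
  rw [hge]
  exact h1.fderiv

lemma psi_comp (T : Phase m →L[ℝ] Phase m)
    (hT : ∀ v w : Phase m, ⟪T v, Jmap (T w)⟫ = ⟪v, Jmap w⟫)
    (f : Phase m → ℝ) (hf : ContDiff ℝ 3 f) (Z : Phase m) :
    psi (fun Z => f (T Z)) Z = psi f (T Z) := by
  have hg : gradient (fun Z => f (T Z)) Z
      = ContinuousLinearMap.adjoint T (gradient f (T Z)) :=
    gradient_comp T f Z ((hf.differentiable (by norm_num)).differentiableAt)
  have hh : hess (fun Z => f (T Z)) Z
      = ((ContinuousLinearMap.adjoint T).comp (hess f (T Z))).comp T :=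
    hess_comp T f hf Z
  unfold psi
  rw [hg, hh]
  simp only [ContinuousLinearMap.comp_apply]
  rw [T_Jmap_adjoint T hT, ContinuousLinearMap.adjoint_inner_right, T_Jmap_adjoint T hT]

lemma psi_differentiable (f : Phase m → ℝ) (hf : ContDiff ℝ 3 f) :
    Differentiable ℝ (psi f) := by
  have hgc : ContDiff ℝ 2 (gradient f) := gradient_contDiff_two f hf
  have hgd : Differentiable ℝ (gradient f) := hgc.differentiable two_ne_zero
  have hu : Differentiable ℝ (fun z => Jmap (m := m) (gradient f z)) :=
    fun z => (Jmap.differentiable.differentiableAt).comp z (hgd z)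
  have hB : Differentiable ℝ (fun z : Phase m => hess f z) := by
    unfold hess
    exact (hgc.fderiv_right (m := 1) (by norm_num)).differentiable one_ne_zero
  intro z
  have h1 : DifferentiableAt ℝ (fun z => hess f z (Jmap (gradient f z))) z :=
    (hB z).clm_apply (hu z)
  exact ((hu z).inner ℝ h1)

end AuxLemmas

/-- coordinate invariance of regularized DTH dynamics.
Let `T` be a linear symplectic transformation (`⟨Tv, J(Tw)⟩ = ⟨v, Jw⟩`),
`𝓚(Z) = 𝓗(TZ)`, `z₀ = TZ₀`, `z₁ = TZ₁`. Then `(Z₀, Z₁, λ, μ)` satisfies the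
regularized DTH equations for `𝓚` iff `(z₀, z₁, λ, μ)` satisfies them
for `𝓗` (same multipliers `λ`, `μ` and regularization level `c`). -/
theorem regularized_dth_coordinate_invariance (m : ℕ) (hm : 1 ≤ m)
    (T : Phase m →L[ℝ] Phase m)
    (hT : ∀ v w : Phase m, ⟪T v, Jmap (T w)⟫ = ⟪v, Jmap w⟫)
    (𝓗 : Phase m → ℝ) (h𝓗 : ContDiff ℝ 3 𝓗) (c : ℝ)
    (𝓚 : Phase m → ℝ) (h𝓚 : ∀ Z : Phase m, 𝓚 Z = 𝓗 (T Z))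
    (Z₀ Z₁ : Phase m) (lam mu : ℝ)
    (z₀ z₁ : Phase m) (hz₀ : z₀ = T Z₀) (hz₁ : z₁ = T Z₁)
    (Zbar : Phase m) (hZbar : Zbar = (2:ℝ)⁻¹ • (Z₀ + Z₁))
    (zbar : Phase m) (hzbar : zbar = (2:ℝ)⁻¹ • (z₀ + z₁)) :
    (Z₁ - Z₀ = lam • Jmap (gradient 𝓚 Zbar) + mu • Jmap (gradient (psi 𝓚) Zbar) ∧
      𝓚 Zbar = 0 ∧ psi 𝓚 Zbar ≥ c ∧ mu * (psi 𝓚 Zbar - c) = 0 ∧ mu ≤ 0)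
    ↔ (z₁ - z₀ = lam • Jmap (gradient 𝓗 zbar) + mu • Jmap (gradient (psi 𝓗) zbar) ∧
      𝓗 zbar = 0 ∧ psi 𝓗 zbar ≥ c ∧ mu * (psi 𝓗 zbar - c) = 0 ∧ mu ≤ 0) := by
  have h𝓚' : 𝓚 = fun Z => 𝓗 (T Z) := funext h𝓚
  have hTz : zbar = T Zbar := by
    rw [hzbar, hZbar, hz₀, hz₁, map_smul, map_add]
  have hgradK : gradient 𝓚 Zbar = ContinuousLinearMap.adjoint T (gradient 𝓗 zbar) := by
    rw [h𝓚', hTz]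
    exact gradient_comp T 𝓗 Zbar ((h𝓗.differentiable (by norm_num)).differentiableAt)
  have hpsiK : psi 𝓚 = fun Z => psi 𝓗 (T Z) := by
    rw [h𝓚']
    exact funext fun Z => psi_comp T hT 𝓗 h𝓗 Z
  have hpsiKbar : psi 𝓚 Zbar = psi 𝓗 zbar := by rw [hpsiK, hTz]
  have hgradpsiK : gradient (psi 𝓚) Zbar
      = ContinuousLinearMap.adjoint T (gradient (psi 𝓗) zbar) := by
    rw [hpsiK, hTz]
    exact gradient_comp T (psi 𝓗) Zbar ((psi_differentiable 𝓗 h𝓗) (T Zbar))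
  have hKbar : 𝓚 Zbar = 𝓗 zbar := by rw [h𝓚 Zbar, hTz]
  have keyEq : (Z₁ - Z₀ = lam • Jmap (gradient 𝓚 Zbar) + mu • Jmap (gradient (psi 𝓚) Zbar))
      ↔ (z₁ - z₀ = lam • Jmap (gradient 𝓗 zbar) + mu • Jmap (gradient (psi 𝓗) zbar)) := by
    rw [hgradK, hgradpsiK]
    constructor
    · intro h
      have h2 := congrArg T h
      rw [map_sub, map_add, map_smul, map_smul, T_Jmap_adjoint T hT, T_Jmap_adjoint T hT] at h2
      rw [hz₀, hz₁]
      exact h2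
    · intro h
      apply T_inj T hT
      rw [map_sub, map_add, map_smul, map_smul, T_Jmap_adjoint T hT, T_Jmap_adjoint T hT,
        ← hz₀, ← hz₁]
      exact h
  rw [keyEq, hKbar, hpsiKbar]
end
end
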